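/- Let A ∈ SL(d,ℤ) (integer matrix with determinant ±1) and let G_ε be the noise operator on L²₀(𝕋^d) acting diagonally in Fourier basis by multiplication with e^{-ε|k|^{2α}}, and U_F the Koopman operator of the automorphism F = A^†. Then the operator norm of T^n, where T = G_ε U_F, equals exp(−ε · min over nonzero k ∈ ℤ^d of Σ_{l=1}^n |A^l k|^{2α}). -/

import Mathlib

private lemma aux_norm_sq_sum {E : Type*} [NormedAddCommGroup E] [InnerProductSpace ℂ E]
    {ι : Type*} {v : ι → E} (hv : Orthonormal ℂ v) (c : ι → ℂ) (s : Finset ι) :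
    ‖∑ i ∈ s, c i • v i‖ ^ 2 = ∑ i ∈ s, ‖c i‖ ^ 2 := by
  have h := hv.inner_sum c c s
  have h2 : ‖∑ i ∈ s, c i • v i‖ ^ 2 =
      RCLike.re (inner (𝕜 := ℂ) (∑ i ∈ s, c i • v i) (∑ i ∈ s, c i • v i)) :=
    InnerProductSpace.norm_sq_eq_re_inner _
  rw [h2, h, map_sum]
  refine Finset.sum_congr rfl fun i _ => ?_
  rw [RCLike.conj_mul]
  norm_cast

/-- the norm of `Tⁿ = (G_ε U_F)ⁿ` for a toral automorphism `A ∈ SL(d,ℤ)`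
is `exp(-ε · min_{k≠0} Σ_{l=1}^n |Aˡ k|^{2α})`.  The space `L²₀(𝕋^d)` is modelled by a
Hilbert space with an orthonormal basis indexed by the nonzero frequencies `k ∈ ℤ^d`,
on which `T` acts by `T e_k = e^{-ε|Ak|^{2α}} e_{Ak}`. -/
theorem norm_pow_noisy_koopman_toral_automorphism
    (d : ℕ) (hd : 0 < d) (A : Matrix (Fin d) (Fin d) ℤ)
    (hA : A.det = 1 ∨ A.det = -1)
    (ε α : ℝ) (hε : 0 < ε) (hα : 0 < α) (hα1 : α ≤ 1)
    {H : Type*} [NormedAddCommGroup H] [InnerProductSpace ℂ H] [CompleteSpace H]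
    (b : HilbertBasis {k : Fin d → ℤ // k ≠ 0} ℂ H)
    (T : H →L[ℂ] H)
    (hT : ∀ (k : Fin d → ℤ) (hk : k ≠ 0) (hk' : A.mulVec k ≠ 0),
      T (b ⟨k, hk⟩) =
        (Real.exp (-(ε * (∑ i, ((A.mulVec k i : ℤ) : ℝ) ^ 2) ^ α)) : ℂ) • b ⟨A.mulVec k, hk'⟩) :
    ∀ n : ℕ, 1 ≤ n →
      ‖T ^ n‖ = Real.exp (-(ε * sInf {s : ℝ | ∃ k : Fin d → ℤ, k ≠ 0 ∧
        s = ∑ l ∈ Finset.Icc 1 n, (∑ i, (((A ^ l).mulVec k i : ℤ) : ℝ) ^ 2) ^ α})) := by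
  classical
  intro n hn
  -- A is invertible
  have hUdet : IsUnit A.det := by rcases hA with h | h <;> simp [h]
  have hInv : Invertible A := A.invertibleOfIsUnitDet hUdet
  have hinj : ∀ m : ℕ, Function.Injective ((A ^ m).mulVec) := by
    intro m x y hxy
    have h2 := congrArg ((⅟(A ^ m)).mulVec) hxy
    simpa [Matrix.mulVec_mulVec] using h2
  have hne : ∀ (m : ℕ) (k : Fin d → ℤ), k ≠ 0 → (A ^ m).mulVec k ≠ 0 := by
    intro m k hk h0
    exact hk (hinj m (by simpa [Matrix.mulVec_zero] using h0))
  -- weight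
  set w : (Fin d → ℤ) → ℝ := fun m => (∑ i, ((m i : ℤ) : ℝ) ^ 2) ^ α with hw
  have hw0 : ∀ m, 0 ≤ w m := fun m =>
    Real.rpow_nonneg (Finset.sum_nonneg fun i _ => sq_nonneg _) _
  -- action of T ^ m on basis vectors
  have hpow : ∀ (m : ℕ) (k : Fin d → ℤ) (hk : k ≠ 0),
      (T ^ m) (b ⟨k, hk⟩) =
        (Real.exp (-(ε * ∑ l ∈ Finset.Icc 1 m, w ((A ^ l).mulVec k))) : ℂ) •
          b ⟨(A ^ m).mulVec k, hne m k hk⟩ := by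
    intro m
    induction m with
    | zero =>
      intro k hk
      have : (⟨(A ^ 0).mulVec k, hne 0 k hk⟩ : {k : Fin d → ℤ // k ≠ 0}) = ⟨k, hk⟩ :=
        Subtype.ext (by simp [Matrix.one_mulVec])
      simp [this]
    | succ m ih =>
      intro k hk
      have hmem : (A ^ m).mulVec k ≠ 0 := hne m k hk
      have hA1 : A.mulVec ((A ^ m).mulVec k) = (A ^ (m + 1)).mulVec k := by
        rw [Matrix.mulVec_mulVec, ← pow_succ']
      have hstep := hT ((A ^ m).mulVec k) hmem (by rw [hA1]; exact hne (m + 1) k hk)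
      have heq : (⟨A.mulVec ((A ^ m).mulVec k), by rw [hA1]; exact hne (m + 1) k hk⟩ : {k : Fin d → ℤ // k ≠ 0}) =
          ⟨(A ^ (m + 1)).mulVec k, hne (m + 1) k hk⟩ := Subtype.ext hA1
      rw [pow_succ']
      rw [ContinuousLinearMap.mul_apply, ih k hk, map_smul, hstep, heq, smul_smul,
        ← Complex.ofReal_mul, ← Real.exp_add]
      congr 2
      rw [Finset.sum_Icc_succ_top (Nat.le_add_left 1 m)]
      have : w ((A ^ (m + 1)).mulVec k) =
          (∑ i, ((A.mulVec ((A ^ m).mulVec k) i : ℤ) : ℝ) ^ 2) ^ α := by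
        rw [hA1]
      rw [this]; ring
  -- the set of exponents
  set S : Set ℝ := {s : ℝ | ∃ k : Fin d → ℤ, k ≠ 0 ∧
      s = ∑ l ∈ Finset.Icc 1 n, (∑ i, (((A ^ l).mulVec k i : ℤ) : ℝ) ^ 2) ^ α} with hS
  have hSw : S = {s : ℝ | ∃ k : Fin d → ℤ, k ≠ 0 ∧
      s = ∑ l ∈ Finset.Icc 1 n, w ((A ^ l).mulVec k)} := rfl
  have hk₀ : (fun _ : Fin d => (1 : ℤ)) ≠ 0 := by
    intro h
    have := congrFun h ⟨0, hd⟩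
    simp at this
  have hSne : S.Nonempty :=
    ⟨_, (fun _ => 1), hk₀, rfl⟩
  have hSbdd : BddBelow S := by
    refine ⟨0, fun s hs => ?_⟩
    obtain ⟨k, hk, rfl⟩ := hs
    exact Finset.sum_nonneg fun l _ => hw0 _
  -- the function s ↦ exp(-(ε s))
  set f : ℝ → ℝ := fun s => Real.exp (-(ε * s)) with hf
  have hfA : Antitone f := fun x y hxy => Real.exp_le_exp.2 (by nlinarith)
  have hmap : f (sInf S) = sSup (f '' S) :=
    hfA.map_csInf_of_continuousAt
      (Continuous.continuousAt (by fun_prop)) hSne hSbdd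
  -- bounds for elements of f '' S
  have hfS_le_one : ∀ y ∈ f '' S, y ≤ 1 := by
    rintro y ⟨s, hs, rfl⟩
    obtain ⟨k, hk, rfl⟩ := hs
    have hs0 : (0:ℝ) ≤ ∑ l ∈ Finset.Icc 1 n, (∑ i, (((A ^ l).mulVec k i : ℤ) : ℝ) ^ 2) ^ α :=
      Finset.sum_nonneg fun l _ => hw0 _
    exact Real.exp_le_one_iff.2 (by nlinarith)
  have hbddAbove : BddAbove (f '' S) := ⟨1, hfS_le_one⟩
  set M : ℝ := sSup (f '' S) with hM
  have hM0 : 0 < M := lt_of_lt_of_le (Real.exp_pos _)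
    (le_csSup hbddAbove ⟨_, hSne.choose_spec, rfl⟩)
  -- norms of T^n on basis vectors
  have hnormbasis : ∀ (k : Fin d → ℤ) (hk : k ≠ 0),
      ‖(T ^ n) (b ⟨k, hk⟩)‖ = f (∑ l ∈ Finset.Icc 1 n, w ((A ^ l).mulVec k)) := by
    intro k hk
    rw [hpow n k hk, norm_smul]
    have h1 : ‖b ⟨(A ^ n).mulVec k, hne n k hk⟩‖ = 1 := b.orthonormal.1 _
    rw [h1, mul_one, Complex.norm_real, Real.norm_eq_abs, abs_of_pos (Real.exp_pos _)]
  -- lower bound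
  have hlow : M ≤ ‖T ^ n‖ := by
    refine csSup_le (hSne.image f) ?_
    rintro y ⟨s, ⟨k, hk, rfl⟩, rfl⟩
    have := (T ^ n).le_opNorm (b ⟨k, hk⟩)
    rw [hnormbasis k hk, b.orthonormal.1 _, mul_one] at this
    exact this
  -- upper bound
  have hup : ‖T ^ n‖ ≤ M := by
    refine ContinuousLinearMap.opNorm_le_bound _ hM0.le ?_
    intro x
    -- prove on a dense subspace
    have hdense : ∀ y ∈ (Submodule.span ℂ (Set.range b) : Submodule ℂ H),
        ‖(T ^ n) y‖ ≤ M * ‖y‖ := by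
      intro y hy
      obtain ⟨c, rfl⟩ := Finsupp.mem_span_range_iff_exists_finsupp.mp hy
      rw [Finsupp.sum]
      -- image family
      set σ : {k : Fin d → ℤ // k ≠ 0} → {k : Fin d → ℤ // k ≠ 0} :=
        fun i => ⟨(A ^ n).mulVec i.1, hne n i.1 i.2⟩ with hσ
      have hσinj : Function.Injective σ := by
        intro i j hij
        exact Subtype.ext (hinj n (congrArg Subtype.val hij))
      have himg : (T ^ n) (∑ i ∈ c.support, c i • b i) =
          ∑ i ∈ c.support,
            (c i * (Real.exp (-(ε * ∑ l ∈ Finset.Icc 1 n, w ((A ^ l).mulVec i.1))) : ℂ)) •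
              b (σ i) := by
        rw [map_sum]
        refine Finset.sum_congr rfl fun i _ => ?_
        rw [map_smul]
        have : (b i : H) = b ⟨i.1, i.2⟩ := by congr
        rw [this, hpow n i.1 i.2, smul_smul]
      rw [himg]
      have hON : Orthonormal ℂ (fun i => b (σ i)) := b.orthonormal.comp σ hσinj
      have h1 := aux_norm_sq_sum hON
        (fun i => c i * (Real.exp (-(ε * ∑ l ∈ Finset.Icc 1 n, w ((A ^ l).mulVec i.1))) : ℂ))
        c.support
      have h2 := aux_norm_sq_sum b.orthonormal (fun i => c i) c.support
      have hsq : ‖∑ i ∈ c.support,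
            (c i * (Real.exp (-(ε * ∑ l ∈ Finset.Icc 1 n, w ((A ^ l).mulVec i.1))) : ℂ)) •
              b (σ i)‖ ^ 2 ≤ (M * ‖∑ i ∈ c.support, c i • b i‖) ^ 2 := by
        rw [h1, mul_pow, h2, Finset.mul_sum]
        refine Finset.sum_le_sum fun i _ => ?_
        have hcoef : ‖(Real.exp (-(ε * ∑ l ∈ Finset.Icc 1 n, w ((A ^ l).mulVec i.1))) : ℂ)‖
            ≤ M := by
          have hmem : f (∑ l ∈ Finset.Icc 1 n, w ((A ^ l).mulVec i.1)) ∈ f '' S :=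
            ⟨_, ⟨i.1, i.2, rfl⟩, rfl⟩
          rw [Complex.norm_real, Real.norm_eq_abs, abs_of_pos (Real.exp_pos _)]
          exact le_csSup hbddAbove hmem
        rw [norm_mul, mul_pow]
        calc ‖c i‖ ^ 2 * ‖(Real.exp (-(ε * ∑ l ∈ Finset.Icc 1 n, w ((A ^ l).mulVec i.1))) : ℂ)‖ ^ 2
            ≤ ‖c i‖ ^ 2 * M ^ 2 := by
              refine mul_le_mul_of_nonneg_left ?_ (sq_nonneg _)
              exact pow_le_pow_left₀ (norm_nonneg _) hcoef 2
          _ = M ^ 2 * ‖c i‖ ^ 2 := by ring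
      have hnn : 0 ≤ M * ‖∑ i ∈ c.support, c i • b i‖ :=
        mul_nonneg hM0.le (norm_nonneg _)
      exact (pow_le_pow_iff_left₀ (norm_nonneg _) hnn (two_ne_zero)).1 hsq
    -- extend by density
    have hclosed : IsClosed {y : H | ‖(T ^ n) y‖ ≤ M * ‖y‖} :=
      isClosed_le ((T ^ n).continuous.norm) (continuous_const.mul continuous_norm)
    have hxmem : x ∈ closure ((Submodule.span ℂ (Set.range ⇑b) : Submodule ℂ H) : Set H) := by
      have := b.dense_span
      rw [← Submodule.topologicalClosure_coe, this]
      trivial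
    exact closure_minimal hdense hclosed hxmem
  rw [show Real.exp (-(ε * sInf S)) = f (sInf S) from rfl, hmap]
  exact le_antisymm hup hlow
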